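/- Let y : [0,1] → ℝ be continuous, let a : [0,1] → [0,∞) be continuous with α = ∫₀¹ a(t) dt satisfying 0 < α < 1. Then the function u : [0,1] → ℝ defined by u(t) = ∫₀¹ ( G(t,s) + (1/(1-α)) ∫₀¹ a(τ) G(τ,s) dτ ) y(s) ds is four times continuously differentiable and satisfies u''''(t) + y(t) = 0 for all t ∈ (0,1), u'(0) = u'(1) = u''(0) = 0, and u(0) = ∫₀¹ a(s) u(s) ds. -/

import Mathlib

open MeasureTheory intervalIntegral Set

/-- The Green's function of the fourth-order problem. -/
noncomputable def G (t s : ℝ) : ℝ :=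
  if s ≤ t then (t ^ 3 * (1 - s) ^ 2 - (t - s) ^ 3) / 6
  else t ^ 3 * (1 - s) ^ 2 / 6

lemma Gcont : Continuous fun p : ℝ × ℝ => G p.1 p.2 := by
  have : (fun p : ℝ × ℝ => G p.1 p.2) = fun p : ℝ × ℝ =>
      if p.2 ≤ p.1 then (p.1 ^ 3 * (1 - p.2) ^ 2 - (p.1 - p.2) ^ 3) / 6
      else p.1 ^ 3 * (1 - p.2) ^ 2 / 6 := rfl
  rw [this]
  apply Continuous.if_le (by fun_prop) (by fun_prop) continuous_snd continuous_fst
  intro p hp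
  rw [hp]
  ring

lemma swap_aux {F : ℝ → ℝ → ℝ} (hF : Continuous (Function.uncurry F)) :
    ∫ τ in (0:ℝ)..1, ∫ σ in (0:ℝ)..1, F τ σ = ∫ σ in (0:ℝ)..1, ∫ τ in (0:ℝ)..1, F τ σ := by
  rw [intervalIntegral.integral_of_le zero_le_one, intervalIntegral.integral_of_le zero_le_one]
  simp_rw [intervalIntegral.integral_of_le zero_le_one]
  have hi : IntegrableOn (Function.uncurry F) (Ioc (0:ℝ) 1 ×ˢ Ioc (0:ℝ) 1) (volume.prod volume) :=
    (hF.continuousOn.integrableOn_compact (isCompact_Icc.prod isCompact_Icc)).mono_set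
      (Set.prod_mono Ioc_subset_Icc_self Ioc_subset_Icc_self)
  exact MeasureTheory.integral_integral_swap (by rwa [Measure.prod_restrict, ← IntegrableOn])

noncomputable def Itg (g : ℝ → ℝ) (k : ℕ) (t : ℝ) : ℝ := ∫ s in (0:ℝ)..t, s ^ k * g s

lemma hItg {g : ℝ → ℝ} (hg : Continuous g) (k : ℕ) (t : ℝ) :
    HasDerivAt (Itg g k) (t ^ k * g t) t :=
  (((continuous_pow k).mul hg).integral_hasStrictDerivAt 0 t).hasDerivAt

noncomputable def W0 (g : ℝ → ℝ) (A c t : ℝ) : ℝ :=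
  A * t ^ 3 / 6 + c -
    (t ^ 3 * Itg g 0 t - 3 * t ^ 2 * Itg g 1 t + 3 * t * Itg g 2 t - Itg g 3 t) / 6

noncomputable def W1 (g : ℝ → ℝ) (A t : ℝ) : ℝ :=
  A * t ^ 2 / 2 - (t ^ 2 * Itg g 0 t - 2 * t * Itg g 1 t + Itg g 2 t) / 2

noncomputable def W2 (g : ℝ → ℝ) (A t : ℝ) : ℝ :=
  A * t - (t * Itg g 0 t - Itg g 1 t)

noncomputable def W3 (g : ℝ → ℝ) (A t : ℝ) : ℝ := A - Itg g 0 t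

lemma hW0 {g : ℝ → ℝ} (hg : Continuous g) (A c t : ℝ) :
    HasDerivAt (W0 g A c) (W1 g A t) t := by
  have h0 := hItg hg 0 t
  have h1 := hItg hg 1 t
  have h2 := hItg hg 2 t
  have h3 := hItg hg 3 t
  have H := ((((hasDerivAt_pow 3 t).const_mul A).div_const 6).add_const c).sub
    (((((hasDerivAt_pow 3 t).mul h0).sub
        (((hasDerivAt_pow 2 t).const_mul 3).mul h1)).add
      ((HasDerivAt.const_mul (3:ℝ) (hasDerivAt_id' (x := t))).mul h2)).sub h3 |>.div_const 6)
  refine H.congr_deriv ?_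
  simp only [W1]
  ring

lemma hW1 {g : ℝ → ℝ} (hg : Continuous g) (A t : ℝ) :
    HasDerivAt (W1 g A) (W2 g A t) t := by
  have h0 := hItg hg 0 t
  have h1 := hItg hg 1 t
  have h2 := hItg hg 2 t
  have H := (((hasDerivAt_pow 2 t).const_mul A).div_const 2).sub
    ((((hasDerivAt_pow 2 t).mul h0).sub
        ((HasDerivAt.const_mul (2:ℝ) (hasDerivAt_id' (x := t))).mul h1)).add h2 |>.div_const 2)
  refine H.congr_deriv ?_
  simp only [W2]
  ring

lemma hW2 {g : ℝ → ℝ} (hg : Continuous g) (A t : ℝ) :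
    HasDerivAt (W2 g A) (W3 g A t) t := by
  have h0 := hItg hg 0 t
  have h1 := hItg hg 1 t
  have H := HasDerivAt.sub (HasDerivAt.const_mul A (hasDerivAt_id' (x := t)))
    (HasDerivAt.sub (HasDerivAt.mul (hasDerivAt_id' (x := t)) h0) h1)
  refine H.congr_deriv ?_
  simp only [W3]
  ring

lemma hW3 {g : ℝ → ℝ} (hg : Continuous g) (A t : ℝ) :
    HasDerivAt (W3 g A) (-g t) t := by
  have h0 := hItg hg 0 t
  have H := (hasDerivAt_const t A).sub h0
  refine H.congr_deriv ?_
  ring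

lemma contDiff_four {f0 f1 f2 f3 f4 : ℝ → ℝ}
    (h0 : ∀ t, HasDerivAt f0 (f1 t) t) (h1 : ∀ t, HasDerivAt f1 (f2 t) t)
    (h2 : ∀ t, HasDerivAt f2 (f3 t) t) (h3 : ∀ t, HasDerivAt f3 (f4 t) t)
    (h4 : Continuous f4) : ContDiff ℝ 4 f0 := by
  have d0 : deriv f0 = f1 := funext fun t => (h0 t).deriv
  have d1 : deriv f1 = f2 := funext fun t => (h1 t).deriv
  have d2 : deriv f2 = f3 := funext fun t => (h2 t).deriv
  have d3 : deriv f3 = f4 := funext fun t => (h3 t).deriv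
  have e4 : ContDiff ℝ 0 f4 := contDiff_zero.2 h4
  have e3 : ContDiff ℝ 1 f3 := by
    rw [show (1 : WithTop ℕ∞) = 0 + 1 from rfl, contDiff_succ_iff_deriv]
    exact ⟨fun t => (h3 t).differentiableAt, by simp, d3 ▸ e4⟩
  have e2 : ContDiff ℝ 2 f2 := by
    rw [show (2 : WithTop ℕ∞) = 1 + 1 from rfl, contDiff_succ_iff_deriv]
    exact ⟨fun t => (h2 t).differentiableAt, by simp, d2 ▸ e3⟩
  have e1 : ContDiff ℝ 3 f1 := by
    rw [show (3 : WithTop ℕ∞) = 2 + 1 from rfl, contDiff_succ_iff_deriv]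
    exact ⟨fun t => (h1 t).differentiableAt, by simp, d1 ▸ e2⟩
  rw [show (4 : WithTop ℕ∞) = 3 + 1 from rfl, contDiff_succ_iff_deriv]
  exact ⟨fun t => (h0 t).differentiableAt, by simp, d0 ▸ e1⟩

lemma L1 {g : ℝ → ℝ} (hg : Continuous g) (t : ℝ) :
    ∫ s in (0:ℝ)..t, (t - s) ^ 3 / 6 * g s =
      (t ^ 3 * Itg g 0 t - 3 * t ^ 2 * Itg g 1 t + 3 * t * Itg g 2 t - Itg g 3 t) / 6 := by
  have e : ∀ s : ℝ, (t - s) ^ 3 / 6 * g s =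
      t ^ 3 / 6 * (s ^ 0 * g s) - 3 * t ^ 2 / 6 * (s ^ 1 * g s)
        + 3 * t / 6 * (s ^ 2 * g s) - 1 / 6 * (s ^ 3 * g s) := fun s => by ring
  have i : ∀ k : ℕ, IntervalIntegrable (fun s => s ^ k * g s) volume 0 t :=
    fun k => ((continuous_pow k).mul hg).intervalIntegrable 0 t
  have ic : ∀ (r : ℝ) (k : ℕ), IntervalIntegrable (fun s => r * (s ^ k * g s)) volume 0 t :=
    fun r k => (i k).const_mul r
  simp_rw [e]
  rw [intervalIntegral.integral_sub (((ic _ 0).sub (ic _ 1)).add (ic _ 2)) (ic _ 3),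
    intervalIntegral.integral_add ((ic _ 0).sub (ic _ 1)) (ic _ 2),
    intervalIntegral.integral_sub (ic _ 0) (ic _ 1),
    intervalIntegral.integral_const_mul, intervalIntegral.integral_const_mul,
    intervalIntegral.integral_const_mul, intervalIntegral.integral_const_mul]
  simp only [Itg]
  ring

lemma L2 {g : ℝ → ℝ} (hg : Continuous g) :
    ∫ s in (0:ℝ)..1, (1 - s) ^ 2 * g s = Itg g 0 1 - 2 * Itg g 1 1 + Itg g 2 1 := by
  have e : ∀ s : ℝ, (1 - s) ^ 2 * g s =
      s ^ 0 * g s - 2 * (s ^ 1 * g s) + s ^ 2 * g s := fun s => by ring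
  have i : ∀ k : ℕ, IntervalIntegrable (fun s => s ^ k * g s) volume 0 1 :=
    fun k => ((continuous_pow k).mul hg).intervalIntegrable 0 1
  simp_rw [e]
  rw [intervalIntegral.integral_add ((i 0).sub ((i 1).const_mul 2)) (i 2),
    intervalIntegral.integral_sub (i 0) ((i 1).const_mul 2),
    intervalIntegral.integral_const_mul]
  simp only [Itg]

lemma L3 {g : ℝ → ℝ} (hg : Continuous g) {t : ℝ} (ht : t ∈ Set.Icc (0:ℝ) 1) :
    ∫ s in (0:ℝ)..1, G t s * g s =
      (∫ s in (0:ℝ)..1, (1 - s) ^ 2 * g s) * t ^ 3 / 6 -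
        (t ^ 3 * Itg g 0 t - 3 * t ^ 2 * Itg g 1 t + 3 * t * Itg g 2 t - Itg g 3 t) / 6 := by
  obtain ⟨ht0, ht1⟩ := ht
  have hGt : Continuous fun s => G t s := Gcont.comp (continuous_const.prodMk continuous_id)
  have i1 : IntervalIntegrable (fun s => G t s * g s) volume 0 t :=
    (hGt.mul hg).intervalIntegrable 0 t
  have i2 : IntervalIntegrable (fun s => G t s * g s) volume t 1 :=
    (hGt.mul hg).intervalIntegrable t 1
  rw [← intervalIntegral.integral_add_adjacent_intervals i1 i2]
  have e1 : ∫ s in (0:ℝ)..t, G t s * g s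
      = ∫ s in (0:ℝ)..t, (t ^ 3 * (1 - s) ^ 2 / 6 * g s - (t - s) ^ 3 / 6 * g s) := by
    apply intervalIntegral.integral_congr
    intro s hs
    rw [Set.uIcc_of_le ht0] at hs
    simp only [G]
    rw [if_pos hs.2]
    ring
  have e2 : ∫ s in t..1, G t s * g s = ∫ s in t..1, t ^ 3 * (1 - s) ^ 2 / 6 * g s := by
    apply intervalIntegral.integral_congr
    intro s hs
    rw [Set.uIcc_of_le ht1] at hs
    simp only [G]
    split_ifs with h
    · obtain rfl : s = t := le_antisymm h hs.1
      ring
    · rfl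
  have ia : IntervalIntegrable (fun s => t ^ 3 * (1 - s) ^ 2 / 6 * g s) volume 0 t :=
    (Continuous.intervalIntegrable (by fun_prop) 0 t)
  have ib : IntervalIntegrable (fun s => (t - s) ^ 3 / 6 * g s) volume 0 t :=
    (Continuous.intervalIntegrable (by fun_prop) 0 t)
  have ia2 : IntervalIntegrable (fun s => t ^ 3 * (1 - s) ^ 2 / 6 * g s) volume t 1 :=
    (Continuous.intervalIntegrable (by fun_prop) t 1)
  rw [e1, e2, intervalIntegral.integral_sub ia ib, L1 hg t]
  have e3 : (∫ s in (0:ℝ)..t, t ^ 3 * (1 - s) ^ 2 / 6 * g s)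
      + ∫ s in t..1, t ^ 3 * (1 - s) ^ 2 / 6 * g s = (∫ s in (0:ℝ)..1, (1 - s) ^ 2 * g s) * t ^ 3 / 6 := by
    rw [intervalIntegral.integral_add_adjacent_intervals ia ia2]
    have e : ∀ s : ℝ, t ^ 3 * (1 - s) ^ 2 / 6 * g s = t ^ 3 / 6 * ((1 - s) ^ 2 * g s) :=
      fun s => by ring
    simp_rw [e]
    rw [intervalIntegral.integral_const_mul]
    ring
  linarith [e3]
theorem stmt_1 (y a u : ℝ → ℝ)
    (hy : ContinuousOn y (Set.Icc 0 1))
    (ha : ContinuousOn a (Set.Icc 0 1))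
    (ha0 : ∀ t ∈ Set.Icc (0 : ℝ) 1, 0 ≤ a t)
    (hα0 : 0 < ∫ t in (0 : ℝ)..1, a t)
    (hα1 : (∫ t in (0 : ℝ)..1, a t) < 1)
    (hu : ∀ t, u t = ∫ s in (0 : ℝ)..1,
      (G t s + (1 / (1 - ∫ τ in (0 : ℝ)..1, a τ)) *
        ∫ τ in (0 : ℝ)..1, a τ * G τ s) * y s) :
    ContDiffOn ℝ 4 u (Set.Icc 0 1) ∧
    (∀ t ∈ Set.Ioo (0 : ℝ) 1,
      iteratedDerivWithin 4 u (Set.Icc 0 1) t + y t = 0) ∧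
    derivWithin u (Set.Icc 0 1) 0 = 0 ∧
    derivWithin u (Set.Icc 0 1) 1 = 0 ∧
    iteratedDerivWithin 2 u (Set.Icc 0 1) 0 = 0 ∧
    u 0 = ∫ s in (0 : ℝ)..1, a s * u s := by
  have h01 : (0:ℝ) ≤ 1 := zero_le_one
  have hI : UniqueDiffOn ℝ (Set.Icc (0:ℝ) 1) := uniqueDiffOn_Icc one_pos
  have hmem : ∀ t : ℝ, max 0 (min t 1) ∈ Set.Icc (0:ℝ) 1 :=
    fun t => ⟨le_max_left _ _, max_le zero_le_one (min_le_right _ _)⟩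
  set g : ℝ → ℝ := fun t => y (max 0 (min t 1)) with hgdef
  set b : ℝ → ℝ := fun t => a (max 0 (min t 1)) with hbdef
  have hg : Continuous g := hy.comp_continuous (by fun_prop) hmem
  have hb : Continuous b := ha.comp_continuous (by fun_prop) hmem
  have hgy : ∀ t ∈ Set.Icc (0:ℝ) 1, g t = y t := by
    intro t ht
    simp only [hgdef]
    rw [min_eq_left ht.2, max_eq_right ht.1]
  have hba : ∀ t ∈ Set.Icc (0:ℝ) 1, b t = a t := by
    intro t ht
    simp only [hbdef]
    rw [min_eq_left ht.2, max_eq_right ht.1]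
  set α := ∫ t in (0:ℝ)..1, a t with hαdef
  have hne : (1:ℝ) - α ≠ 0 := ne_of_gt (by linarith)
  have hαb : (∫ t in (0:ℝ)..1, b t) = α := by
    rw [hαdef]
    apply intervalIntegral.integral_congr
    intro τ hτ
    rw [Set.uIcc_of_le h01] at hτ
    exact hba τ hτ
  set K : ℝ → ℝ := fun s => ∫ τ in (0:ℝ)..1, b τ * G τ s with hKdef
  have hKc : Continuous K := by
    rw [hKdef]
    exact intervalIntegral.continuous_parametric_intervalIntegral_of_continuous'
      (f := fun s τ => b τ * G τ s)
      ((hb.comp continuous_snd).mul (Gcont.comp (continuous_snd.prodMk continuous_fst))) 0 1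
  set A := ∫ s in (0:ℝ)..1, (1 - s) ^ 2 * g s with hAdef
  set c := (1 / (1 - α)) * ∫ s in (0:ℝ)..1, K s * g s with hcdef
  -- step 1 : u = ∫ G + c on [0,1]
  have hu' : ∀ t ∈ Set.Icc (0:ℝ) 1, u t = (∫ s in (0:ℝ)..1, G t s * g s) + c := by
    intro t ht
    rw [hu t, hcdef]
    have e1 : Set.EqOn
        (fun s => (G t s + (1 / (1 - α)) * ∫ τ in (0:ℝ)..1, a τ * G τ s) * y s)
        (fun s => G t s * g s + (1 / (1 - α)) * (K s * g s)) (Set.uIcc 0 1) := by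
      intro s hs
      rw [Set.uIcc_of_le h01] at hs
      have hK' : (∫ τ in (0:ℝ)..1, a τ * G τ s) = K s := by
        rw [hKdef]
        apply intervalIntegral.integral_congr
        intro τ hτ
        rw [Set.uIcc_of_le h01] at hτ
        show a τ * G τ s = b τ * G τ s
        rw [hba τ hτ]
      simp only
      rw [hK', hgy s hs]
      ring
    rw [intervalIntegral.integral_congr e1]
    have hGt : Continuous fun s => G t s := Gcont.comp (continuous_const.prodMk continuous_id)
    rw [intervalIntegral.integral_add (f := fun s => G t s * g s)
        (g := fun s => 1 / (1 - α) * (K s * g s)) ((hGt.mul hg).intervalIntegrable 0 1)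
      ((continuous_const.mul (hKc.mul hg)).intervalIntegrable 0 1),
      intervalIntegral.integral_const_mul]
  -- step 2 : u coincides with W0 on [0,1]
  have hEq : Set.EqOn u (W0 g A c) (Set.Icc 0 1) := by
    intro t ht
    rw [hu' t ht, L3 hg ht]
    simp only [W0]
    rw [hAdef]
    ring
  have hd0 : ∀ t, HasDerivAt (W0 g A c) (W1 g A t) t := hW0 hg A c
  have hd1 : ∀ t, HasDerivAt (W1 g A) (W2 g A t) t := hW1 hg A
  have hd2 : ∀ t, HasDerivAt (W2 g A) (W3 g A t) t := hW2 hg A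
  have hd3 : ∀ t, HasDerivAt (W3 g A) ((fun x => -g x) t) t := hW3 hg A
  have E1 : Set.EqOn (derivWithin u (Set.Icc 0 1)) (W1 g A) (Set.Icc 0 1) := by
    intro t ht
    rw [derivWithin_congr hEq (hEq ht)]
    exact ((hd0 t).hasDerivWithinAt).derivWithin (hI t ht)
  have E1' : Set.EqOn (iteratedDerivWithin 1 u (Set.Icc 0 1)) (W1 g A) (Set.Icc 0 1) := by
    intro t ht
    rw [iteratedDerivWithin_one]
    exact E1 ht
  have E2 : Set.EqOn (iteratedDerivWithin 2 u (Set.Icc 0 1)) (W2 g A) (Set.Icc 0 1) := by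
    intro t ht
    rw [show (2:ℕ) = 1 + 1 from rfl, iteratedDerivWithin_succ,
      derivWithin_congr E1' (E1' ht)]
    exact ((hd1 t).hasDerivWithinAt).derivWithin (hI t ht)
  have E3 : Set.EqOn (iteratedDerivWithin 3 u (Set.Icc 0 1)) (W3 g A) (Set.Icc 0 1) := by
    intro t ht
    rw [show (3:ℕ) = 2 + 1 from rfl, iteratedDerivWithin_succ,
      derivWithin_congr E2 (E2 ht)]
    exact ((hd2 t).hasDerivWithinAt).derivWithin (hI t ht)
  have E4 : Set.EqOn (iteratedDerivWithin 4 u (Set.Icc 0 1)) (fun x => -g x) (Set.Icc 0 1) := by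
    intro t ht
    rw [show (4:ℕ) = 3 + 1 from rfl, iteratedDerivWithin_succ,
      derivWithin_congr E3 (E3 ht)]
    exact ((hd3 t).hasDerivWithinAt).derivWithin (hI t ht)
  have h0mem : (0:ℝ) ∈ Set.Icc (0:ℝ) 1 := ⟨le_refl 0, h01⟩
  have h1mem : (1:ℝ) ∈ Set.Icc (0:ℝ) 1 := ⟨h01, le_refl 1⟩
  refine ⟨?_, ?_, ?_, ?_, ?_, ?_⟩
  · exact (contDiff_four hd0 hd1 hd2 hd3 hg.neg).contDiffOn.congr fun x hx => hEq hx
  · intro t ht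
    rw [E4 (Set.Ioo_subset_Icc_self ht)]
    have := hgy t (Set.Ioo_subset_Icc_self ht)
    simp only [this]
    ring
  · rw [E1 h0mem]
    simp [W1, Itg, intervalIntegral.integral_same]
  · rw [E1 h1mem]
    simp only [W1]
    rw [hAdef, L2 hg]
    ring
  · rw [E2 h0mem]
    simp [W2, Itg, intervalIntegral.integral_same]
  · have hu0 : u 0 = c := by
      rw [hEq h0mem]
      simp [W0, Itg, intervalIntegral.integral_same]
    rw [hu0]
    have hv : Continuous fun s => ∫ σ in (0:ℝ)..1, G s σ * g σ :=
      intervalIntegral.continuous_parametric_intervalIntegral_of_continuous'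
        (f := fun s σ => G s σ * g σ) (Gcont.mul (hg.comp continuous_snd)) 0 1
    have e1 : ∫ s in (0:ℝ)..1, a s * u s
        = ∫ s in (0:ℝ)..1, (b s * (∫ σ in (0:ℝ)..1, G s σ * g σ) + b s * c) := by
      apply intervalIntegral.integral_congr
      intro s hs
      rw [Set.uIcc_of_le h01] at hs
      show a s * u s = b s * (∫ σ in (0:ℝ)..1, G s σ * g σ) + b s * c
      rw [hu' s hs, hba s hs]
      ring
    rw [e1, intervalIntegral.integral_add (f := fun s => b s * ∫ σ in (0:ℝ)..1, G s σ * g σ)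
        (g := fun s => b s * c) ((hb.mul hv).intervalIntegrable 0 1)
      ((hb.mul continuous_const).intervalIntegrable 0 1)]
    have e2 : ∫ s in (0:ℝ)..1, b s * c = α * c := by
      rw [intervalIntegral.integral_mul_const, hαb]
    have e3 : ∫ s in (0:ℝ)..1, b s * ∫ σ in (0:ℝ)..1, G s σ * g σ
        = ∫ σ in (0:ℝ)..1, K σ * g σ := by
      have l : ∀ τ : ℝ, b τ * ∫ σ in (0:ℝ)..1, G τ σ * g σ
          = ∫ σ in (0:ℝ)..1, b τ * (G τ σ * g σ) :=
        fun τ => (intervalIntegral.integral_const_mul _ _).symm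
      simp_rw [l]
      rw [swap_aux (F := fun τ σ => b τ * (G τ σ * g σ))
        ((hb.comp continuous_fst).mul (Gcont.mul (hg.comp continuous_snd)))]
      apply intervalIntegral.integral_congr
      intro σ hσ
      have l2 : ∀ τ : ℝ, b τ * (G τ σ * g σ) = b τ * G τ σ * g σ := fun τ => by ring
      simp only
      simp_rw [l2]
      rw [intervalIntegral.integral_mul_const, hKdef]
    rw [e2, e3, hcdef]
    field_simp
    ring
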